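/- Let x ∈ ℝ_{≥0}^E have dyadic rational entries x_e = Σ_{i=0}^{L} (x_e)_i·2^{−i}, let E_i := supp_i(x) for 0 ≤ i ≤ L, let F_L := ∅, and let F_0, …, F_{L−1} ⊆ E be such that for every 0 ≤ i ≤ L−1 and every vertex v, |d_{F_i}(v) − (d_{E_{i+1}}(v) + d_{F_{i+1}}(v))/2| ≤ 1, where d_S(v) denotes the number of edges of S incident to v. Then for every vertex v and every 0 ≤ i ≤ L, |x^{(i)}(v) − x(v)| ≤ 2^{−i+1}; consequently d^{2^{−i+1}}_V(x, x^{(i)}) = 0. -/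

import Mathlib

open Finset

variable {V : Type*} [Fintype V] [DecidableEq V]

/-- The fractional degree `x(v) := Σ_{e ∋ v} x_e` of a vertex `v` under `x`. -/
noncomputable def fracDeg (x : Sym2 V → ℝ) (v : V) : ℝ :=
  ∑ e : Sym2 V, if v ∈ e then x e else 0

/-- `d^ε_V(x,y) := Σ_{v∈V} max(|x(v) − y(v)| − ε, 0)`. -/
noncomputable def dV (ε : ℝ) (x y : Sym2 V → ℝ) : ℝ :=
  ∑ v : V, max (|fracDeg x v - fracDeg y v| - ε) 0

/-- Degree of `v` in a finite set of edges. -/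
def fdeg (S : Finset (Sym2 V)) (v : V) : ℕ :=
  (S.filter (fun e => v ∈ e)).card

/-- `x^{(i)}_e := 1[e ∈ F_i]·2^{−i} + Σ_{j=0}^{i} 1[e ∈ E_j]·2^{−j}`. -/
noncomputable def xvec (E F : ℕ → Finset (Sym2 V)) (i : ℕ) : Sym2 V → ℝ := fun e =>
  (if e ∈ F i then ((2 : ℝ) ^ i)⁻¹ else 0) +
    ∑ j ∈ Finset.range (i + 1), if e ∈ E j then ((2 : ℝ) ^ j)⁻¹ else 0

lemma sum_ite_mem_deg (S : Finset (Sym2 V)) (c : ℝ) (v : V) :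
    ∑ e : Sym2 V, (if v ∈ e then (if e ∈ S then c else 0) else 0)
      = (fdeg S v : ℝ) * c := by
  classical
  have h : ∀ e : Sym2 V, (if v ∈ e then (if e ∈ S then c else 0) else 0)
      = (if e ∈ S.filter (fun e => v ∈ e) then c else 0) := by
    intro e
    simp only [Finset.mem_filter]
    split_ifs with h1 h2 h3 h3 <;> tauto
  rw [Finset.sum_congr rfl fun e _ => h e, Finset.sum_ite_mem, Finset.univ_inter,
    Finset.sum_const, fdeg, nsmul_eq_mul]

/-- Let `x ∈ ℝ_{≥0}^E` have dyadic entries `x_e = Σ_{i=0}^{L} (x_e)_i·2^{−i}`, let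
`E_i := supp_i(x)`, `F_L := ∅`, and let `F_0, …, F_{L−1}` be such that for every
`0 ≤ i ≤ L−1` and every vertex `v`,
`|d_{F_i}(v) − (d_{E_{i+1}}(v) + d_{F_{i+1}}(v))/2| ≤ 1`.  Then for every vertex `v` and
every `0 ≤ i ≤ L`, `|x^{(i)}(v) − x(v)| ≤ 2^{−i+1}`; consequently
`d^{2^{−i+1}}_V(x, x^{(i)}) = 0`. -/
theorem stmt_8 (x : Sym2 V → ℝ) (L : ℕ) (d : Sym2 V → ℕ → ℕ)
    (hd : ∀ e i, d e i ≤ 1)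
    (hx : ∀ e, x e = ∑ i ∈ Finset.range (L + 1), (d e i : ℝ) / 2 ^ i)
    (E F : ℕ → Finset (Sym2 V))
    (hE : ∀ i, E i = Finset.univ.filter (fun e => d e i = 1))
    (hFL : F L = ∅)
    (hF : ∀ i, i < L → ∀ v : V,
      |(fdeg (F i) v : ℝ) - ((fdeg (E (i + 1)) v : ℝ) + (fdeg (F (i + 1)) v : ℝ)) / 2| ≤ 1) :
    ∀ i ≤ L,
      (∀ v : V, |fracDeg (xvec E F i) v - fracDeg x v| ≤ 2 / 2 ^ i) ∧
      dV (2 / 2 ^ i) x (xvec E F i) = 0 := by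
  classical
  -- entries of x as indicators of membership in E j
  have hde : ∀ (e : Sym2 V) (j : ℕ),
      (d e j : ℝ) / 2 ^ j = if e ∈ E j then ((2 : ℝ) ^ j)⁻¹ else 0 := by
    intro e j
    rw [hE]
    simp only [Finset.mem_filter, Finset.mem_univ, true_and]
    have hb := hd e j
    interval_cases (d e j)
    · simp
    · simp [one_div]
  -- fracDeg of x
  have hX : ∀ v : V, fracDeg x v
      = ∑ j ∈ Finset.range (L + 1), (fdeg (E j) v : ℝ) * ((2 : ℝ) ^ j)⁻¹ := by
    intro v
    rw [fracDeg]
    have h1 : ∀ e : Sym2 V, (if v ∈ e then x e else 0)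
        = ∑ j ∈ Finset.range (L + 1),
            (if v ∈ e then (if e ∈ E j then ((2 : ℝ) ^ j)⁻¹ else 0) else 0) := by
      intro e
      rw [hx]
      by_cases h : v ∈ e
      · simp only [if_pos h]
        exact Finset.sum_congr rfl fun j _ => hde e j
      · simp [h]
    rw [Finset.sum_congr rfl fun e _ => h1 e, Finset.sum_comm]
    exact Finset.sum_congr rfl fun j _ => sum_ite_mem_deg _ _ _
  -- fracDeg of xvec
  have hXV : ∀ (i : ℕ) (v : V), fracDeg (xvec E F i) v
      = (fdeg (F i) v : ℝ) * ((2 : ℝ) ^ i)⁻¹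
        + ∑ j ∈ Finset.range (i + 1), (fdeg (E j) v : ℝ) * ((2 : ℝ) ^ j)⁻¹ := by
    intro i v
    rw [fracDeg]
    have h1 : ∀ e : Sym2 V, (if v ∈ e then xvec E F i e else 0)
        = (if v ∈ e then (if e ∈ F i then ((2 : ℝ) ^ i)⁻¹ else 0) else 0)
          + ∑ j ∈ Finset.range (i + 1),
              (if v ∈ e then (if e ∈ E j then ((2 : ℝ) ^ j)⁻¹ else 0) else 0) := by
      intro e
      rw [xvec]
      by_cases h : v ∈ e
      · simp only [if_pos h]
      · simp [h]
    rw [Finset.sum_congr rfl fun e _ => h1 e, Finset.sum_add_distrib, Finset.sum_comm,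
      sum_ite_mem_deg]
    congr 1
    exact Finset.sum_congr rfl fun j _ => sum_ite_mem_deg _ _ _
  -- the difference formula
  have hdiff : ∀ i ≤ L, ∀ v : V, fracDeg (xvec E F i) v - fracDeg x v
      = (fdeg (F i) v : ℝ) * ((2 : ℝ) ^ i)⁻¹
        - ∑ j ∈ Finset.Ico (i + 1) (L + 1), (fdeg (E j) v : ℝ) * ((2 : ℝ) ^ j)⁻¹ := by
    intro i hi v
    rw [hX, hXV]
    have hsplit : ∑ j ∈ Finset.range (i + 1), (fdeg (E j) v : ℝ) * ((2 : ℝ) ^ j)⁻¹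
        + ∑ j ∈ Finset.Ico (i + 1) (L + 1), (fdeg (E j) v : ℝ) * ((2 : ℝ) ^ j)⁻¹
        = ∑ j ∈ Finset.range (L + 1), (fdeg (E j) v : ℝ) * ((2 : ℝ) ^ j)⁻¹ := by
      rw [Finset.range_eq_Ico, Finset.range_eq_Ico]
      exact Finset.sum_Ico_consecutive (fun j => (fdeg (E j) v : ℝ) * ((2 : ℝ) ^ j)⁻¹) (m := 0) (n := i + 1) (k := L + 1) (Nat.zero_le _) (by omega)
    linarith [hsplit]
  -- the key bound, by downward induction
  have key : ∀ k : ℕ, ∀ i : ℕ, i + k = L →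
      ∀ v : V, |fracDeg (xvec E F i) v - fracDeg x v| ≤ 2 / 2 ^ i := by
    intro k
    induction k with
    | zero =>
      intro i hi v
      simp only [Nat.add_zero] at hi
      subst hi
      rw [hdiff i le_rfl v]
      have h1 : fdeg (F i) v = 0 := by simp [fdeg, hFL]
      rw [h1, Finset.Ico_self]
      simp
      positivity
    | succ k ih =>
      intro i hi v
      have hiL : i < L := by omega
      have h2 : fracDeg (xvec E F i) v - fracDeg x v
          = ((2 : ℝ) ^ i)⁻¹ * ((fdeg (F i) v : ℝ)
              - ((fdeg (E (i + 1)) v : ℝ) + (fdeg (F (i + 1)) v : ℝ)) / 2)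
            + (fracDeg (xvec E F (i + 1)) v - fracDeg x v) := by
        rw [hdiff i (by omega) v, hdiff (i + 1) (by omega) v]
        rw [Finset.sum_eq_sum_Ico_succ_bot (by omega)
          (fun j => (fdeg (E j) v : ℝ) * ((2 : ℝ) ^ j)⁻¹)]
        have hp : ((2 : ℝ) ^ (i + 1))⁻¹ = ((2 : ℝ) ^ i)⁻¹ / 2 := by
          rw [pow_succ]; field_simp
        rw [hp]
        ring
      rw [h2]
      have h3 := abs_add_le (((2 : ℝ) ^ i)⁻¹ * ((fdeg (F i) v : ℝ)
        - ((fdeg (E (i + 1)) v : ℝ) + (fdeg (F (i + 1)) v : ℝ)) / 2))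
        (fracDeg (xvec E F (i + 1)) v - fracDeg x v)
      have h4 : |((2 : ℝ) ^ i)⁻¹ * ((fdeg (F i) v : ℝ)
          - ((fdeg (E (i + 1)) v : ℝ) + (fdeg (F (i + 1)) v : ℝ)) / 2)| ≤ ((2 : ℝ) ^ i)⁻¹ := by
        rw [abs_mul, abs_of_nonneg (by positivity)]
        calc ((2 : ℝ) ^ i)⁻¹ * |(fdeg (F i) v : ℝ)
            - ((fdeg (E (i + 1)) v : ℝ) + (fdeg (F (i + 1)) v : ℝ)) / 2|
            ≤ ((2 : ℝ) ^ i)⁻¹ * 1 := by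
              apply mul_le_mul_of_nonneg_left (hF i hiL v) (by positivity)
          _ = ((2 : ℝ) ^ i)⁻¹ := mul_one _
      have h5 := ih (i + 1) (by omega) v
      have h6 : (2 : ℝ) / 2 ^ (i + 1) = ((2 : ℝ) ^ i)⁻¹ := by
        rw [pow_succ]; field_simp
      have h7 : (2 : ℝ) / 2 ^ i = ((2 : ℝ) ^ i)⁻¹ + ((2 : ℝ) ^ i)⁻¹ := by
        field_simp
        ring
      rw [h7]
      rw [h6] at h5
      linarith
  intro i hi
  have hb : ∀ v : V, |fracDeg (xvec E F i) v - fracDeg x v| ≤ 2 / 2 ^ i :=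
    key (L - i) i (by omega)
  refine ⟨hb, ?_⟩
  rw [dV]
  apply Finset.sum_eq_zero
  intro v _
  have := hb v
  rw [abs_sub_comm] at this
  exact max_eq_right (by linarith)
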